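/- For triangles u, v of the regular triangular tiling with cubulation coordinates in Z^3, the dual-graph distance between u and v equals the L1 distance |u1-v1| + |u2-v2| + |u3-v3|. -/

import Mathlib

noncomputable def lineF : Fin 3 → ℝ × ℝ → ℝ := fun i p =>
  if i = 0 then p.2 - 1/3
  else if i = 1 then (Real.sqrt 3 * p.1 - p.2) / 2 - 1/3
  else -(Real.sqrt 3 * p.1 + p.2) / 2 - 1/3

def triRegion (v : Fin 3 → ℤ) : Set (ℝ × ℝ) :=
  {p | ∀ i : Fin 3, ((v i : ℝ) - 1 ≤ lineF i p ∧ lineF i p ≤ (v i : ℝ))}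

def IsTile (v : Fin 3 → ℤ) : Prop := (interior (triRegion v)).Nonempty

abbrev Tile : Type := {v : Fin 3 → ℤ // IsTile v}

def Tile.region (T : Tile) : Set (ℝ × ℝ) := triRegion T.val

def EdgeAdj (T U : Tile) : Prop := T ≠ U ∧ ¬ (T.region ∩ U.region).Subsingleton

def VertexAdj (T U : Tile) : Prop := T ≠ U ∧ (T.region ∩ U.region).Nonempty

def sumv (v : Fin 3 → ℤ) : ℤ := v 0 + v 1 + v 2

def dualGraph : SimpleGraph Tile where
  Adj := EdgeAdj
  symm := ⟨fun T U h => ⟨h.1.symm, fun hs => h.2 (by rwa [Set.inter_comm] at hs)⟩⟩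
  loopless := ⟨fun T h => h.1 rfl⟩

lemma lineF_sum (p : ℝ × ℝ) : lineF 0 p + lineF 1 p + lineF 2 p = -1 := by
  simp [lineF]; ring

lemma lineF_cont (i : Fin 3) : Continuous (lineF i) := by
  unfold lineF; fin_cases i <;> simp <;> fun_prop

lemma lineF_surj (a : Fin 3 → ℝ) (ha : a 0 + a 1 + a 2 = -1) : ∃ p, ∀ i, lineF i p = a i := by
  have hs : Real.sqrt 3 > 0 := Real.sqrt_pos.mpr (by norm_num)
  refine ⟨⟨(2 * a 1 + a 0 + 1) / Real.sqrt 3, a 0 + 1/3⟩, ?_⟩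
  have hx : Real.sqrt 3 * ((2 * a 1 + a 0 + 1) / Real.sqrt 3) = 2 * a 1 + a 0 + 1 := by
    field_simp
  intro i
  fin_cases i <;> simp [lineF, hx] <;> linarith

lemma interior_empty_aux {s : Set (ℝ × ℝ)} {c : ℝ} (h : ∀ p ∈ s, lineF 0 p = c) :
    interior s = ∅ := by
  rw [Set.eq_empty_iff_forall_notMem]
  intro p hp
  rw [mem_interior_iff_mem_nhds, Metric.mem_nhds_iff] at hp
  obtain ⟨ε, hε, hball⟩ := hp
  have hmem : (p.1, p.2 + ε/2) ∈ Metric.ball p ε := by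
    simp only [Metric.mem_ball, Prod.dist_eq, Real.dist_eq, sub_self, abs_zero]
    rw [show p.2 + ε/2 - p.2 = ε/2 by ring, abs_of_pos (by linarith)]
    simp only [max_eq_right (by linarith : (0:ℝ) ≤ ε/2)]
    linarith
  have h1 : lineF 0 (p.1, p.2 + ε/2) = c := h _ (hball hmem)
  have h2 : lineF 0 p = c := h _ (hball (Metric.mem_ball_self hε))
  simp [lineF] at h1 h2
  linarith

lemma isTile_sum {v : Fin 3 → ℤ} (h : IsTile v) : sumv v = 0 ∨ sumv v = 1 := by
  obtain ⟨p, hp⟩ := h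
  have hmem : p ∈ triRegion v := interior_subset hp
  have h0 := hmem 0; have h1 := hmem 1; have h2 := hmem 2
  have hs := lineF_sum p
  have hb1 : (-1 : ℝ) ≤ (v 0 : ℝ) + v 1 + v 2 := by linarith [h0.2, h1.2, h2.2]
  have hb2 : ((v 0 : ℝ) + v 1 + v 2) - 3 ≤ -1 := by linarith [h0.1, h1.1, h2.1]
  have hZ1 : (-1 : ℤ) ≤ sumv v := by unfold sumv; exact_mod_cast hb1
  have hZ2 : sumv v ≤ 2 := by
    have : ((v 0 : ℝ) + v 1 + v 2) ≤ 2 := by linarith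
    unfold sumv; exact_mod_cast this
  by_contra hc
  push_neg at hc
  have : sumv v = -1 ∨ sumv v = 2 := by omega
  have hne : p ∈ interior (triRegion v) := hp
  rcases this with hsv | hsv
  · have hforce : ∀ q ∈ triRegion v, lineF 0 q = (v 0 : ℝ) := by
      intro q hq
      have hsv' : (v 0 : ℝ) + v 1 + v 2 = -1 := by
        have : ((v 0 + v 1 + v 2 : ℤ) : ℝ) = ((-1 : ℤ) : ℝ) := by
          rw [show v 0 + v 1 + v 2 = sumv v from rfl, hsv]
        push_cast at this; linarith
      have hq0 := hq 0; have hq1 := hq 1; have hq2 := hq 2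
      have := lineF_sum q
      linarith [hq0.2, hq1.2, hq2.2]
    rw [interior_empty_aux hforce] at hne
    exact hne
  · have hforce : ∀ q ∈ triRegion v, lineF 0 q = (v 0 : ℝ) - 1 := by
      intro q hq
      have hsv' : (v 0 : ℝ) + v 1 + v 2 = 2 := by
        have : ((v 0 + v 1 + v 2 : ℤ) : ℝ) = ((2 : ℤ) : ℝ) := by
          rw [show v 0 + v 1 + v 2 = sumv v from rfl, hsv]
        push_cast at this; linarith
      have hq0 := hq 0; have hq1 := hq 1; have hq2 := hq 2
      have := lineF_sum q
      linarith [hq0.1, hq1.1, hq2.1]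
    rw [interior_empty_aux hforce] at hne
    exact hne

lemma isTile_of_sum {v : Fin 3 → ℤ} (h : sumv v = 0 ∨ sumv v = 1) : IsTile v := by
  set c : ℝ := if sumv v = 0 then 1/3 else 2/3 with hc
  have hc0 : 0 < c := by rw [hc]; split <;> norm_num
  have hc1 : c < 1 := by rw [hc]; split <;> norm_num
  have hsum : (v 0 : ℝ) + v 1 + v 2 = 3 * c - 1 := by
    rcases h with h | h
    · rw [hc, if_pos h]
      have := congrArg (fun n : ℤ => (n : ℝ)) h
      push_cast [sumv] at this; linarith
    · rw [hc, if_neg (by omega)]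
      have := congrArg (fun n : ℤ => (n : ℝ)) h
      push_cast [sumv] at this; linarith
  obtain ⟨p, hp⟩ := lineF_surj (fun i => (v i : ℝ) - c) (by linarith)
  have hopen : IsOpen {q : ℝ × ℝ | ∀ i, (v i : ℝ) - 1 < lineF i q ∧ lineF i q < v i} := by
    have heq : {q : ℝ × ℝ | ∀ i, (v i : ℝ) - 1 < lineF i q ∧ lineF i q < v i}
        = ⋂ i, lineF i ⁻¹' Set.Ioo ((v i : ℝ) - 1) (v i) := by
      ext q; simp [Set.mem_iInter, Set.mem_Ioo]
    rw [heq]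
    exact isOpen_iInter_of_finite fun i => isOpen_Ioo.preimage (lineF_cont i)
  refine ⟨p, interior_maximal ?_ hopen ?_⟩
  · intro q hq i; exact ⟨(hq i).1.le, (hq i).2.le⟩
  · intro i; rw [hp i]; constructor <;> simp <;> linarith

lemma lineF_inj {p q : ℝ × ℝ} (h0 : lineF 0 p = lineF 0 q) (h1 : lineF 1 p = lineF 1 q) : p = q := by
  have hs : Real.sqrt 3 > 0 := Real.sqrt_pos.mpr (by norm_num)
  simp [lineF] at h0 h1
  have h2 : p.2 = q.2 := by linarith
  have h1' : Real.sqrt 3 * p.1 = Real.sqrt 3 * q.1 := by linarith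
  exact Prod.ext (mul_left_cancel₀ hs.ne' h1') h2

lemma edgeAdj_spec {T U : Tile} (h : EdgeAdj T U) :
    ∃ i, (∀ j, j ≠ i → T.val j = U.val j) ∧
      (T.val i - U.val i = 1 ∨ U.val i - T.val i = 1) := by
  obtain ⟨hne, hns⟩ := h
  rw [Set.not_subsingleton_iff] at hns
  obtain ⟨p, hp, q, hq, hpq⟩ := hns
  have coordEq : ∀ i, T.val i ≠ U.val i →
      lineF i p = lineF i q ∧ (T.val i - U.val i = 1 ∨ U.val i - T.val i = 1) := by
    intro i hi
    have hTp := hp.1 i; have hUp := hp.2 i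
    have hTq := hq.1 i; have hUq := hq.2 i
    rcases lt_or_gt_of_ne hi with hlt | hlt
    · have hcast : (T.val i : ℝ) + 1 ≤ (U.val i : ℝ) := by exact_mod_cast hlt
      have h1 : lineF i p = (T.val i : ℝ) := by linarith [hTp.2, hUp.1]
      have h2 : lineF i q = (T.val i : ℝ) := by linarith [hTq.2, hUq.1]
      have h3 : (U.val i : ℝ) ≤ (T.val i : ℝ) + 1 := by linarith [hTp.2, hUp.1]
      have h4 : U.val i ≤ T.val i + 1 := by exact_mod_cast h3
      exact ⟨h1.trans h2.symm, Or.inr (by omega)⟩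
    · have hcast : (U.val i : ℝ) + 1 ≤ (T.val i : ℝ) := by exact_mod_cast hlt
      have h1 : lineF i p = (U.val i : ℝ) := by linarith [hUp.2, hTp.1]
      have h2 : lineF i q = (U.val i : ℝ) := by linarith [hUq.2, hTq.1]
      have h3 : (T.val i : ℝ) ≤ (U.val i : ℝ) + 1 := by linarith [hUp.2, hTp.1]
      have h4 : T.val i ≤ U.val i + 1 := by exact_mod_cast h3
      exact ⟨h1.trans h2.symm, Or.inl (by omega)⟩
  have hone : ∀ i j : Fin 3, i ≠ j → T.val i ≠ U.val i → T.val j ≠ U.val j → False := by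
    intro i j hij hi hj
    have hhi := (coordEq i hi).1
    have hhj := (coordEq j hj).1
    have hsp := lineF_sum p
    have hsq := lineF_sum q
    apply hpq
    have h01 : lineF 0 p = lineF 0 q ∧ lineF 1 p = lineF 1 q := by
      fin_cases i <;> fin_cases j <;>
        simp only [Fin.isValue, Fin.zero_eta, Fin.mk_one,
          show (⟨2, by norm_num⟩ : Fin 3) = 2 from rfl] at hhi hhj hij <;>
        first
          | exact absurd rfl hij
          | (constructor <;> linarith)
    exact lineF_inj h01.1 h01.2
  have : ∃ i, T.val i ≠ U.val i := by
    by_contra hcon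
    push_neg at hcon
    exact hne (Subtype.ext (funext hcon))
  obtain ⟨i, hi⟩ := this
  refine ⟨i, fun j hj => ?_, (coordEq i hi).2⟩
  by_contra hj'
  exact hone i j (Ne.symm hj) hi hj'

lemma edgeAdj_of {T U : Tile} (i : Fin 3) (hj : ∀ j, j ≠ i → T.val j = U.val j)
    (hi : U.val i = T.val i + 1) : EdgeAdj T U := by
  have hsT := isTile_sum T.2
  have hsU := isTile_sum U.2
  have hsUT : sumv U.val = sumv T.val + 1 := by
    unfold sumv
    fin_cases i <;>
      simp only [Fin.isValue, Fin.zero_eta, Fin.mk_one,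
        show (⟨2, by norm_num⟩ : Fin 3) = 2 from rfl] at hi <;>
      [rw [hj 1 (by decide), hj 2 (by decide)];
       rw [hj 0 (by decide), hj 2 (by decide)];
       rw [hj 0 (by decide), hj 1 (by decide)]] <;> omega
  have hsT0 : sumv T.val = 0 := by omega
  have hsR : (T.val 0 : ℝ) + T.val 1 + T.val 2 = 0 := by
    have := congrArg (fun n : ℤ => (n : ℝ)) hsT0
    push_cast [sumv] at this; linarith
  constructor
  · intro h; rw [h] at hsUT; omega
  rw [Set.not_subsingleton_iff]
  fin_cases i <;>
    simp only [Fin.isValue, Fin.zero_eta, Fin.mk_one,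
      show (⟨2, by norm_num⟩ : Fin 3) = 2 from rfl] at hi
  · -- i = 0 : U = T + e₀
    have hU0 : U.val 0 = T.val 0 + 1 := hi
    have hU1 : U.val 1 = T.val 1 := (hj 1 (by decide)).symm
    have hU2 : U.val 2 = T.val 2 := (hj 2 (by decide)).symm
    obtain ⟨p, hpa⟩ := lineF_surj ![(T.val 0 : ℝ), T.val 1, (T.val 2 : ℝ) - 1] (by simp; linarith)
    obtain ⟨q, hqa⟩ := lineF_surj ![(T.val 0 : ℝ), (T.val 1 : ℝ) - 1, T.val 2] (by simp; linarith)
    refine ⟨p, ⟨?_, ?_⟩, q, ⟨?_, ?_⟩, ?_⟩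
    · intro m; fin_cases m <;> rw [hpa] <;> simp <;> norm_num
    · intro m; fin_cases m <;> rw [hpa] <;> simp [hU0, hU1, hU2] <;> push_cast <;> norm_num
    · intro m; fin_cases m <;> rw [hqa] <;> simp <;> norm_num
    · intro m; fin_cases m <;> rw [hqa] <;> simp [hU0, hU1, hU2] <;> push_cast <;> norm_num
    · intro hpq2
      have h1 := hpa 1; rw [hpq2, hqa 1] at h1
      have h0 := hpa 0; rw [hpq2, hqa 0] at h0
      simp at h1 h0
  · -- i = 1 : U = T + e₁
    have hU0 : U.val 0 = T.val 0 := (hj 0 (by decide)).symm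
    have hU1 : U.val 1 = T.val 1 + 1 := hi
    have hU2 : U.val 2 = T.val 2 := (hj 2 (by decide)).symm
    obtain ⟨p, hpa⟩ := lineF_surj ![(T.val 0 : ℝ), T.val 1, (T.val 2 : ℝ) - 1] (by simp; linarith)
    obtain ⟨q, hqa⟩ := lineF_surj ![(T.val 0 : ℝ) - 1, T.val 1, T.val 2] (by simp; linarith)
    refine ⟨p, ⟨?_, ?_⟩, q, ⟨?_, ?_⟩, ?_⟩
    · intro m; fin_cases m <;> rw [hpa] <;> simp <;> norm_num
    · intro m; fin_cases m <;> rw [hpa] <;> simp [hU0, hU1, hU2] <;> push_cast <;> norm_num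
    · intro m; fin_cases m <;> rw [hqa] <;> simp <;> norm_num
    · intro m; fin_cases m <;> rw [hqa] <;> simp [hU0, hU1, hU2] <;> push_cast <;> norm_num
    · intro hpq2
      have h1 := hpa 1; rw [hpq2, hqa 1] at h1
      have h0 := hpa 0; rw [hpq2, hqa 0] at h0
      simp at h1 h0
  · -- i = 2 : U = T + e₂
    have hU0 : U.val 0 = T.val 0 := (hj 0 (by decide)).symm
    have hU1 : U.val 1 = T.val 1 := (hj 1 (by decide)).symm
    have hU2 : U.val 2 = T.val 2 + 1 := hi
    obtain ⟨p, hpa⟩ := lineF_surj ![(T.val 0 : ℝ), (T.val 1 : ℝ) - 1, T.val 2] (by simp; linarith)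
    obtain ⟨q, hqa⟩ := lineF_surj ![(T.val 0 : ℝ) - 1, T.val 1, T.val 2] (by simp; linarith)
    refine ⟨p, ⟨?_, ?_⟩, q, ⟨?_, ?_⟩, ?_⟩
    · intro m; fin_cases m <;> rw [hpa] <;> simp <;> norm_num
    · intro m; fin_cases m <;> rw [hpa] <;> simp [hU0, hU1, hU2] <;> push_cast <;> norm_num
    · intro m; fin_cases m <;> rw [hqa] <;> simp <;> norm_num
    · intro m; fin_cases m <;> rw [hqa] <;> simp [hU0, hU1, hU2] <;> push_cast <;> norm_num
    · intro hpq2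
      have h1 := hpa 1; rw [hpq2, hqa 1] at h1
      have h0 := hpa 0; rw [hpq2, hqa 0] at h0
      simp at h1 h0

def L1 (T U : Tile) : ℤ :=
  |T.val 0 - U.val 0| + |T.val 1 - U.val 1| + |T.val 2 - U.val 2|

lemma L1_adj {T U : Tile} (h : dualGraph.Adj T U) : L1 T U = 1 := by
  obtain ⟨i, hall, hone⟩ := edgeAdj_spec h
  unfold L1
  fin_cases i <;>
    simp only [Fin.isValue, Fin.zero_eta, Fin.mk_one,
      show (⟨2, by norm_num⟩ : Fin 3) = 2 from rfl] at hall hone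
  · rw [hall 1 (by decide), hall 2 (by decide)]
    simp only [sub_self, abs_zero, add_zero]
    rw [abs_eq (by norm_num : (0:ℤ) ≤ 1)]; omega
  · rw [hall 0 (by decide), hall 2 (by decide)]
    simp only [sub_self, abs_zero, add_zero, zero_add]
    rw [abs_eq (by norm_num : (0:ℤ) ≤ 1)]; omega
  · rw [hall 0 (by decide), hall 1 (by decide)]
    simp only [sub_self, abs_zero, add_zero, zero_add]
    rw [abs_eq (by norm_num : (0:ℤ) ≤ 1)]; omega

lemma L1_triangle (T W U : Tile) : L1 T U ≤ L1 T W + L1 W U := by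
  unfold L1
  have h0 := abs_sub_le (T.val 0) (W.val 0) (U.val 0)
  have h1 := abs_sub_le (T.val 1) (W.val 1) (U.val 1)
  have h2 := abs_sub_le (T.val 2) (W.val 2) (U.val 2)
  linarith

lemma L1_le_length : ∀ {T U : Tile} (w : dualGraph.Walk T U), L1 T U ≤ (w.length : ℤ) := by
  intro T U w
  induction w with
  | nil => simp [L1]
  | @cons a b c h w ih =>
    have h1 := L1_adj h
    have h2 := L1_triangle a b c
    simp only [SimpleGraph.Walk.length_cons]
    push_cast
    linarith

lemma exists_walk : ∀ n : ℕ, ∀ T U : Tile, L1 T U = n →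
    ∃ w : dualGraph.Walk T U, w.length = n := by
  intro n
  induction n with
  | zero =>
    intro T U h
    have h0 := abs_nonneg (T.val 0 - U.val 0)
    have h1 := abs_nonneg (T.val 1 - U.val 1)
    have h2 := abs_nonneg (T.val 2 - U.val 2)
    unfold L1 at h
    have e0 : T.val 0 = U.val 0 := by
      have : |T.val 0 - U.val 0| = 0 := by omega
      rw [abs_eq_zero] at this; omega
    have e1 : T.val 1 = U.val 1 := by
      have : |T.val 1 - U.val 1| = 0 := by omega
      rw [abs_eq_zero] at this; omega
    have e2 : T.val 2 = U.val 2 := by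
      have : |T.val 2 - U.val 2| = 0 := by omega
      rw [abs_eq_zero] at this; omega
    have : T = U := Subtype.ext (funext fun i => by fin_cases i <;> assumption)
    subst this
    exact ⟨SimpleGraph.Walk.nil, rfl⟩
  | succ n ih =>
    intro T U h
    have hsT := isTile_sum T.2
    have hsU := isTile_sum U.2
    have hTU : T.val ≠ U.val := by
      intro he
      rw [show (n+1 : ℕ) = n+1 from rfl] at h
      unfold L1 at h
      rw [he] at h
      simp at h
      omega
    rcases hsT with hsT0 | hsT1
    · -- need i with T i < U i
      have hex : ∃ i : Fin 3, T.val i < U.val i := by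
        by_contra hcon
        push_neg at hcon
        have c0 := hcon 0; have c1 := hcon 1; have c2 := hcon 2
        unfold sumv at hsT0 hsU
        have : T.val = U.val := funext fun i => by fin_cases i <;> simp <;> omega
        exact hTU this
      obtain ⟨i, hilt⟩ := hex
      set v' : Fin 3 → ℤ := Function.update T.val i (T.val i + 1) with hv'
      have hsv' : sumv v' = 1 := by
        unfold sumv
        rw [hv']
        fin_cases i <;>
          simp [Function.update_apply, sumv] at hsT0 ⊢ <;> omega
      set T' : Tile := ⟨v', isTile_of_sum (Or.inr hsv')⟩ with hT'
      have hadj : dualGraph.Adj T T' := by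
        apply edgeAdj_of i
        · intro j hj
          rw [hT']
          simp [hv', Function.update_apply, hj]
        · rw [hT']
          simp [hv', Function.update_apply]
      have habs1 : |T.val i - U.val i| = U.val i - T.val i := by
        rw [abs_of_nonpos (by omega)]; omega
      have habs2 : |T.val i + 1 - U.val i| = U.val i - T.val i - 1 := by
        rw [abs_of_nonpos (by omega)]; omega
      have hL1' : L1 T' U = n := by
        have := h
        unfold L1 at this ⊢
        rw [hT']
        fin_cases i <;>
          simp only [Fin.isValue, Fin.zero_eta, Fin.mk_one,
            show (⟨2, by norm_num⟩ : Fin 3) = 2 from rfl] at habs1 habs2 <;>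
          simp [hv', Function.update_apply] <;> omega
      obtain ⟨w, hw⟩ := ih T' U hL1'
      exact ⟨SimpleGraph.Walk.cons hadj w, by simp [hw]⟩
    · -- sumv T = 1 : need i with U i < T i
      have hex : ∃ i : Fin 3, U.val i < T.val i := by
        by_contra hcon
        push_neg at hcon
        have c0 := hcon 0; have c1 := hcon 1; have c2 := hcon 2
        unfold sumv at hsT1 hsU
        have : T.val = U.val := funext fun i => by fin_cases i <;> simp <;> omega
        exact hTU this
      obtain ⟨i, hilt⟩ := hex
      set v' : Fin 3 → ℤ := Function.update T.val i (T.val i - 1) with hv'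
      have hsv' : sumv v' = 0 := by
        unfold sumv
        rw [hv']
        fin_cases i <;>
          simp [Function.update_apply, sumv] at hsT1 ⊢ <;> omega
      set T' : Tile := ⟨v', isTile_of_sum (Or.inl hsv')⟩ with hT'
      have hadj : dualGraph.Adj T T' := by
        apply dualGraph.symm.symm
        apply edgeAdj_of i
        · intro j hj
          rw [hT']
          simp [hv', Function.update_apply, hj]
        · rw [hT']
          simp [hv', Function.update_apply]
      have habs1 : |T.val i - U.val i| = T.val i - U.val i := abs_of_nonneg (by omega)
      have habs2 : |T.val i - 1 - U.val i| = T.val i - U.val i - 1 := by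
        rw [abs_of_nonneg (by omega)]; ring
      have hL1' : L1 T' U = n := by
        have := h
        unfold L1 at this ⊢
        rw [hT']
        fin_cases i <;>
          simp only [Fin.isValue, Fin.zero_eta, Fin.mk_one,
            show (⟨2, by norm_num⟩ : Fin 3) = 2 from rfl] at habs1 habs2 <;>
          simp [hv', Function.update_apply] <;> omega
      obtain ⟨w, hw⟩ := ih T' U hL1'
      exact ⟨SimpleGraph.Walk.cons hadj w, by simp [hw]⟩

theorem dual_graph_dist_eq_l1 (T U : Tile) :
    (dualGraph.dist T U : ℤ) =
      |T.val 0 - U.val 0| + |T.val 1 - U.val 1| + |T.val 2 - U.val 2| := by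
  have hn0 : 0 ≤ L1 T U := by
    unfold L1
    have h0 := abs_nonneg (T.val 0 - U.val 0)
    have h1 := abs_nonneg (T.val 1 - U.val 1)
    have h2 := abs_nonneg (T.val 2 - U.val 2)
    linarith
  obtain ⟨w, hw⟩ := exists_walk (L1 T U).toNat T U (by rw [Int.toNat_of_nonneg hn0])
  have hub : dualGraph.dist T U ≤ (L1 T U).toNat := hw ▸ SimpleGraph.dist_le w
  have hreach : dualGraph.Reachable T U := ⟨w⟩
  obtain ⟨w', hw'⟩ := hreach.exists_walk_length_eq_dist
  have hlb : L1 T U ≤ (w'.length : ℤ) := L1_le_length w'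
  rw [hw'] at hlb
  have : (dualGraph.dist T U : ℤ) = L1 T U := by omega
  rw [this]; rfl
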